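/- Let X be a connected locally compact Hausdorff space and let γX be a compactification of X such that disjoint closed subsets of X with compact boundaries have disjoint closures in γX. Then every cut point of X is a cut point of γX. -/

import Mathlib

/-- Let `X` be a connected locally compact Hausdorff space and `γX` a compactification of
`X` in which disjoint closed subsets of `X` with compact boundaries have disjoint closures.
Then every cut point of `X` is a cut point of `γX`. -/
theorem stmt_13 {X Y : Type*} [TopologicalSpace X] [T2Space X] [LocallyCompactSpace X]
    [ConnectedSpace X] [TopologicalSpace Y] [CompactSpace Y] [T2Space Y]
    (e : X → Y) (he : Topology.IsEmbedding e) (hdense : Dense (Set.range e))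
    (hsep : ∀ A B : Set X, IsClosed A → IsClosed B → Disjoint A B →
      IsCompact (frontier A) → IsCompact (frontier B) →
      Disjoint (closure (e '' A)) (closure (e '' B)))
    (x : X) (hcut : ¬ IsPreconnected ({x}ᶜ : Set X)) :
    ¬ IsPreconnected ({e x}ᶜ : Set Y) := by
  rw [IsPreconnected] at hcut
  push_neg at hcut
  obtain ⟨u, v, hu, hv, hcov, ⟨a, ha⟩, ⟨b, hb⟩, hdisj⟩ := hcut
  set U : Set X := {x}ᶜ ∩ u with hU
  set V : Set X := {x}ᶜ ∩ v with hV
  have hUopen : IsOpen U := (isOpen_compl_singleton).inter hu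
  have hVopen : IsOpen V := (isOpen_compl_singleton).inter hv
  have hUVdisj : U ∩ V = ∅ := by
    apply Set.eq_empty_of_subset_empty
    rw [← hdisj]
    rintro z ⟨⟨hz1, hz2⟩, _, hz3⟩
    exact ⟨hz1, hz2, hz3⟩
  have hUVd : ∀ z : X, z ∈ U → z ∈ V → False := fun z h1 h2 =>
    Set.eq_empty_iff_forall_notMem.mp hUVdisj z ⟨h1, h2⟩
  have hUVcov : ∀ z : X, z ≠ x → z ∈ U ∪ V := by
    intro z hz
    rcases hcov hz with h | h
    · exact Or.inl ⟨hz, h⟩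
    · exact Or.inr ⟨hz, h⟩
  -- closure facts
  have hclU : closure U ⊆ U ∪ {x} := by
    intro z hz
    by_cases hzx : z = x
    · exact Or.inr hzx
    · rcases hUVcov z hzx with h | h
      · exact Or.inl h
      · exfalso
        obtain ⟨w, hwV, hwU⟩ := mem_closure_iff.mp hz V hVopen h
        exact hUVd w hwU hwV
  have hclV : closure V ⊆ V ∪ {x} := by
    intro z hz
    by_cases hzx : z = x
    · exact Or.inr hzx
    · rcases hUVcov z hzx with h | h
      · exfalso
        obtain ⟨w, hwU, hwV⟩ := mem_closure_iff.mp hz U hUopen h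
        exact hUVd w hwU hwV
      · exact Or.inl h
  have hclUV : closure U ∩ closure V ⊆ {x} := by
    rintro z ⟨hz1, hz2⟩
    rcases hclU hz1 with h1 | h1
    · rcases hclV hz2 with h2 | h2
      · exact absurd (hUVd z h1 h2) not_false
      · exact h2
    · exact h1
  -- compact neighborhood of x
  obtain ⟨K, hKc, hKx⟩ := exists_compact_mem_nhds x
  have hxintK : x ∈ interior K := mem_interior_iff_mem_nhds.mpr hKx
  set A : Set X := closure U \ interior K with hA
  set B : Set X := closure V \ interior K with hB
  have hAclosed : IsClosed A := isClosed_closure.sdiff isOpen_interior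
  have hBclosed : IsClosed B := isClosed_closure.sdiff isOpen_interior
  have hABdisj : Disjoint A B := by
    rw [Set.disjoint_left]
    rintro z ⟨hz1, hz2⟩ ⟨hz3, _⟩
    have := hclUV ⟨hz1, hz3⟩
    rw [Set.mem_singleton_iff] at this
    subst this
    exact hz2 hxintK
  have hfrA : ∀ (W : Set X) (C : Set X), IsOpen W → W ∩ {x}ᶜ ∩ (W ∩ {x}ᶜ ∩ (closure C)ᶜ) = W ∩ {x}ᶜ ∩ (W ∩ {x}ᶜ ∩ (closure C)ᶜ) := fun _ _ _ => rfl
  clear hfrA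
  have hfrontier : ∀ (S : Set X), IsOpen S → closure S ⊆ S ∪ {x} →
      IsCompact (frontier (closure S \ interior K)) := by
    intro S hSopen hclS
    apply hKc.of_isClosed_subset isClosed_frontier
    intro z hz
    have hzA : z ∈ closure S \ interior K := by
      have := frontier_subset_closure hz
      rwa [(isClosed_closure.sdiff isOpen_interior).closure_eq] at this
    have hznint : z ∉ interior (closure S \ interior K) := hz.2
    by_contra hzK
    have hzS : z ∈ S := by
      rcases hclS hzA.1 with h | h
      · exact h
      · exact absurd (h ▸ hxintK) hzA.2
    have : S \ K ⊆ interior (closure S \ interior K) := by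
      apply interior_maximal
      · rintro w ⟨hw1, hw2⟩
        exact ⟨subset_closure hw1, fun hw => hw2 (interior_subset hw)⟩
      · exact hSopen.sdiff hKc.isClosed
    exact hznint (this ⟨hzS, hzK⟩)
  have hsepAB : Disjoint (closure (e '' A)) (closure (e '' B)) :=
    hsep A B hAclosed hBclosed hABdisj (hfrontier U hUopen hclU) (hfrontier V hVopen hclV)
  -- the two closed sets in Y
  set C : Set Y := closure (e '' (closure U ∪ {x})) with hC
  set D : Set Y := closure (e '' (closure V ∪ {x})) with hD
  have hCDunion : C ∪ D = Set.univ := by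
    rw [hC, hD, ← closure_union, ← Set.image_union]
    have : closure U ∪ {x} ∪ (closure V ∪ {x}) = Set.univ := by
      apply Set.eq_univ_of_forall
      intro z
      by_cases hz : z = x
      · exact Or.inl (Or.inr hz)
      · rcases hUVcov z hz with h | h
        · exact Or.inl (Or.inl (subset_closure h))
        · exact Or.inr (Or.inl (subset_closure h))
    rw [this, Set.image_univ, hdense.closure_eq]
  -- decompositions
  have hdecomp : ∀ S : Set X, closure S ⊆ S ∪ {x} →
      closure (e '' (closure S ∪ {x})) ⊆
        closure (e '' (closure S \ interior K)) ∪ e '' ((closure S ∪ {x}) ∩ K) := by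
    intro S hclS
    have hKS : IsCompact ((closure S ∪ {x}) ∩ K) :=
      hKc.of_isClosed_subset ((isClosed_closure.union isClosed_singleton).inter hKc.isClosed)
        Set.inter_subset_right
    have himg : IsClosed (e '' ((closure S ∪ {x}) ∩ K)) :=
      (hKS.image he.continuous).isClosed
    have hsub : closure S ∪ {x} ⊆ (closure S \ interior K) ∪ (closure S ∪ {x}) ∩ K := by
      intro z hz
      by_cases hzK : z ∈ K
      · exact Or.inr ⟨hz, hzK⟩
      · rcases hz with h | h
        · exact Or.inl ⟨h, fun hw => hzK (interior_subset hw)⟩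
        · exact absurd (h ▸ hKx) (by simpa using fun hw => hzK (mem_of_mem_nhds hw))
    calc closure (e '' (closure S ∪ {x}))
        ⊆ closure (e '' ((closure S \ interior K) ∪ (closure S ∪ {x}) ∩ K)) :=
          closure_mono (Set.image_mono hsub)
      _ = closure (e '' (closure S \ interior K)) ∪ closure (e '' ((closure S ∪ {x}) ∩ K)) := by
          rw [Set.image_union, closure_union]
      _ ⊆ _ := by rw [himg.closure_eq]
  -- pull back membership in closures
  have hpull : ∀ (S : Set X) (z : X), IsClosed S → e z ∈ closure (e '' S) → z ∈ S := by
    intro S z hScl hz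
    have : z ∈ closure S := by
      rw [he.closure_eq_preimage_closure_image]
      exact hz
    rwa [hScl.closure_eq] at this
  have hCDinter : C ∩ D ⊆ {e x} := by
    rintro y ⟨hyC, hyD⟩
    rcases hdecomp U hclU hyC with h1 | h1 <;> rcases hdecomp V hclV hyD with h2 | h2
    · exact absurd h1 (Set.disjoint_left.mp hsepAB · h2)
    · obtain ⟨z, hzKV, rfl⟩ := h2
      have hzA : z ∈ A := hpull A z hAclosed h1
      exfalso
      rcases hzKV.1 with h | h
      · have := hclUV ⟨hzA.1, h⟩
        rw [Set.mem_singleton_iff] at this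
        exact hzA.2 (this ▸ hxintK)
      · exact hzA.2 (h ▸ hxintK)
    · obtain ⟨z, hzKU, rfl⟩ := h1
      have hzB : z ∈ B := hpull B z hBclosed h2
      exfalso
      rcases hzKU.1 with h | h
      · have := hclUV ⟨h, hzB.1⟩
        rw [Set.mem_singleton_iff] at this
        exact hzB.2 (this ▸ hxintK)
      · exact hzB.2 (h ▸ hxintK)
    · obtain ⟨z, hzKU, rfl⟩ := h1
      obtain ⟨w, hwKV, hew⟩ := h2
      have hwz : w = z := he.injective hew
      subst hwz
      rcases hzKU.1 with h | h
      · rcases hwKV.1 with h' | h'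
        · have := hclUV ⟨h, h'⟩
          rw [Set.mem_singleton_iff] at this
          rw [this]; rfl
        · rw [h']; rfl
      · rw [h]; rfl
  -- membership of images of points of U, V
  have hmemCD : ∀ (S : Set X) (z : X), z ≠ x → z ∉ closure S →
      e z ∉ closure (e '' (closure S ∪ {x})) ∧ e z ≠ e x := by
    intro S z hzx hzS
    constructor
    · intro hz
      have : z ∈ closure S ∪ {x} :=
        hpull _ z (isClosed_closure.union isClosed_singleton) hz
      rcases this with h | h
      · exact hzS h
      · exact hzx h
    · exact fun h => hzx (he.injective h)
  -- conclude
  intro hpc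
  have haU : a ∈ U := ⟨ha.1, ha.2⟩
  have hbV : b ∈ V := ⟨hb.1, hb.2⟩
  have haclV : a ∉ closure V := by
    intro h
    rcases hclV h with h' | h'
    · exact hUVd a haU h'
    · exact ha.1 h'
  have hbclU : b ∉ closure U := by
    intro h
    rcases hclU h with h' | h'
    · exact hUVd b h' hbV
    · exact hb.1 h'
  obtain ⟨haD, haex⟩ := hmemCD V a ha.1 haclV
  obtain ⟨hbC, hbex⟩ := hmemCD U b hb.1 hbclU
  have := hpc Cᶜ Dᶜ (isClosed_closure.isOpen_compl) (isClosed_closure.isOpen_compl)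
    (by
      intro y hy
      by_cases hyC : y ∈ C
      · right
        intro hyD
        exact hy (hCDinter ⟨hyC, hyD⟩)
      · exact Or.inl hyC)
    ⟨e b, hbex, hbC⟩
    ⟨e a, haex, haD⟩
  obtain ⟨y, _, hyC, hyD⟩ := this
  have : y ∈ C ∪ D := hCDunion ▸ Set.mem_univ y
  rcases this with h | h
  · exact hyC h
  · exact hyD h
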